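/- Kolmogorov consistency of the Gaussian intensities: for every integer n ≥ 2, every real p with n + p > 2, and every y ∈ ℝⁿ with Q(y) > 0, ∫_{−∞}^∞ λ_{n+1,p}(y_1, …, y_n, x) dx = λ_{n,p}(y), where for z ∈ ℝ^m (m ≥ 2, m + p > 2, Q(z) > 0) the closed-form intensity is λ_{m,p}(z) = Γ((m+p−2)/2) · 2^{(p−3)/2} · π^{−(m−1)/2} · m^{−1/2} / Q(z)^{(m+p−2)/2}. -/

import Mathlib

open MeasureTheory
open scoped ENNReal

/-- `Q(z) = ∑ᵢ (zᵢ - z̄)²` where `z̄` is the mean of the coordinates. -/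
noncomputable def Qstat (m : ℕ) (z : Fin m → ℝ) : ℝ :=
  ∑ i, (z i - (∑ j, z j) / m) ^ 2

/-- The closed-form Gaussian intensity
`λ_{m,p}(z) = Γ((m+p-2)/2) 2^{(p-3)/2} π^{-(m-1)/2} m^{-1/2} / Q(z)^{(m+p-2)/2}`. -/
noncomputable def lamClosed (m : ℕ) (p : ℝ) (z : Fin m → ℝ) : ℝ :=
  Real.Gamma (((m : ℝ) + p - 2) / 2) * (2 : ℝ) ^ ((p - 3) / 2) *
    Real.pi ^ (-((m : ℝ) - 1) / 2) * (m : ℝ) ^ (-(1 : ℝ) / 2) /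
      Qstat m z ^ (((m : ℝ) + p - 2) / 2)

open Real Set Filter

/-- Integrability of `t ^ (s-1) * exp (-(r*t))` on `Ioi 0`. -/
lemma aux_integrableOn {r s : ℝ} (hr : 0 < r) (hs : 0 < s) :
    IntegrableOn (fun t : ℝ => t ^ (s - 1) * Real.exp (-(r * t))) (Ioi 0) := by
  have h := integrableOn_rpow_mul_exp_neg_mul_rpow (p := 1) (s := s - 1) (b := r)
    (by linarith) one_pos hr
  simpa [Real.rpow_one] using h

/-- `r^{-s} Γ(s) = ∫₀^∞ t^{s-1} e^{-rt} dt` in `ℝ≥0∞` form. -/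
lemma aux_gamma_lintegral {r s : ℝ} (hr : 0 < r) (hs : 0 < s) :
    ENNReal.ofReal (r ^ (-s)) * ENNReal.ofReal (Real.Gamma s) =
      ∫⁻ t in Ioi (0:ℝ), ENNReal.ofReal (t ^ (s - 1) * Real.exp (-(r * t))) := by
  rw [← ofReal_integral_eq_lintegral_ofReal (aux_integrableOn hr hs)
    ((ae_restrict_iff' measurableSet_Ioi).2 (Eventually.of_forall fun t ht => by
      have h0 : (0:ℝ) < t := ht
      positivity))]
  rw [integral_rpow_mul_exp_neg_mul_Ioi hs hr, ← ENNReal.ofReal_mul (by positivity)]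
  congr 2
  rw [one_div, Real.inv_rpow hr.le, ← Real.rpow_neg hr.le]

/-- Gaussian integral in `ℝ≥0∞` form. -/
lemma aux_gauss {b : ℝ} (hb : 0 < b) :
    ∫⁻ x : ℝ, ENNReal.ofReal (Real.exp (-b * x ^ 2)) = ENNReal.ofReal (Real.sqrt (π / b)) := by
  rw [← ofReal_integral_eq_lintegral_ofReal (integrable_exp_neg_mul_sq hb)
    (ae_of_all _ fun x => (Real.exp_pos _).le), integral_gaussian]

/-- The key integral: `∫ (a + b x²)^{-s} dx`. -/
lemma aux_key {a b s : ℝ} (ha : 0 < a) (hb : 0 < b) (hs : 1/2 < s) :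
    ∫⁻ x : ℝ, ENNReal.ofReal ((a + b * x ^ 2) ^ (-s)) =
      ENNReal.ofReal (Real.sqrt (π / b) * ((1/a) ^ (s - 1/2) * Real.Gamma (s - 1/2))
        / Real.Gamma s) := by
  have hs0 : 0 < s := by linarith
  have hG : 0 < Real.Gamma s := Real.Gamma_pos_of_pos hs0
  have hGne : ENNReal.ofReal (Real.Gamma s) ≠ 0 := by
    simp [ENNReal.ofReal_eq_zero, not_le, hG]
  have hGtop : ENNReal.ofReal (Real.Gamma s) ≠ ⊤ := ENNReal.ofReal_ne_top
  have key : (∫⁻ x : ℝ, ENNReal.ofReal ((a + b * x ^ 2) ^ (-s))) *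
      ENNReal.ofReal (Real.Gamma s) =
      ENNReal.ofReal (Real.sqrt (π / b) * ((1/a) ^ (s - 1/2) * Real.Gamma (s - 1/2))) := by
    rw [← lintegral_mul_const' _ _ hGtop]
    have step1 : ∀ x : ℝ, ENNReal.ofReal ((a + b * x ^ 2) ^ (-s)) *
        ENNReal.ofReal (Real.Gamma s) =
        ∫⁻ t in Ioi (0:ℝ), ENNReal.ofReal (t ^ (s - 1) * Real.exp (-((a + b * x ^ 2) * t))) :=
      fun x => aux_gamma_lintegral (by positivity) hs0
    simp_rw [step1]
    rw [lintegral_lintegral_swap]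
    · have step2 : ∀ t ∈ Ioi (0:ℝ),
          (∫⁻ x : ℝ, ENNReal.ofReal (t ^ (s - 1) * Real.exp (-((a + b * x ^ 2) * t)))) =
          ENNReal.ofReal (Real.sqrt (π / b) * (t ^ (s - 1/2 - 1) * Real.exp (-(a * t)))) := by
        intro t ht
        have ht0 : (0:ℝ) < t := ht
        have hrw : ∀ x : ℝ, t ^ (s - 1) * Real.exp (-((a + b * x ^ 2) * t)) =
            (t ^ (s - 1) * Real.exp (-(a * t))) * Real.exp (-(t * b) * x ^ 2) := by
          intro x
          rw [mul_assoc, ← Real.exp_add]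
          ring_nf
        simp_rw [hrw]
        simp_rw [ENNReal.ofReal_mul (by positivity :
          (0:ℝ) ≤ t ^ (s - 1) * Real.exp (-(a * t)))]
        rw [lintegral_const_mul' _ _ ENNReal.ofReal_ne_top, aux_gauss (by positivity)]
        rw [← ENNReal.ofReal_mul (by positivity)]
        congr 1
        have h1 : Real.sqrt (π / (t * b)) = Real.sqrt (π / b) * t ^ (-(1/2) : ℝ) := by
          rw [show π / (t * b) = (π / b) * t⁻¹ by ring,
            Real.sqrt_mul (by positivity) t⁻¹, Real.sqrt_inv,
            Real.rpow_neg ht0.le, Real.sqrt_eq_rpow t]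
        rw [h1, show s - 1/2 - 1 = (s - 1) + (-(1/2)) by ring, Real.rpow_add ht0]
        ring
      rw [setLIntegral_congr_fun measurableSet_Ioi step2]
      simp_rw [ENNReal.ofReal_mul (by positivity : (0:ℝ) ≤ Real.sqrt (π / b))]
      rw [lintegral_const_mul' _ _ ENNReal.ofReal_ne_top]
      rw [← ofReal_integral_eq_lintegral_ofReal (aux_integrableOn ha (by linarith))
        ((ae_restrict_iff' measurableSet_Ioi).2 (Eventually.of_forall fun t ht => by
          have h0 : (0:ℝ) < t := ht
          positivity))]
      rw [integral_rpow_mul_exp_neg_mul_Ioi (by linarith) ha,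
        ← ENNReal.ofReal_mul (by positivity)]
    · exact (by fun_prop : Measurable fun q : ℝ × ℝ =>
        ENNReal.ofReal (q.2 ^ (s-1) * Real.exp (-((a + b*q.1^2)*q.2)))).aemeasurable
  have := congrArg (· * (ENNReal.ofReal (Real.Gamma s))⁻¹) key
  simp only [mul_assoc, ENNReal.mul_inv_cancel hGne hGtop, mul_one] at this
  rw [this, ENNReal.ofReal_div_of_pos hG]
  rfl

/-- Decomposition of `Q` under appending a coordinate. -/
lemma Qstat_snoc (n : ℕ) (hn : 0 < n) (y : Fin n → ℝ) (x : ℝ) :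
    Qstat (n + 1) (Fin.snoc y x) =
      Qstat n y + ((n : ℝ) / ((n : ℝ) + 1)) * (x - (∑ j, y j) / n) ^ 2 := by
  have hn0 : ((n : ℝ)) ≠ 0 := Nat.cast_ne_zero.2 hn.ne'
  have hn1 : ((n : ℝ) + 1) ≠ 0 := by positivity
  have expand : ∀ (A : ℝ), ∑ i, (y i - A) ^ 2 =
      (∑ i, (y i) ^ 2) - 2 * A * (∑ i, y i) + n * A ^ 2 := by
    intro A
    have h : ∀ i, (y i - A) ^ 2 = (y i) ^ 2 - (2 * A) * (y i) + A ^ 2 := fun i => by ring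
    simp_rw [h]
    rw [Finset.sum_add_distrib, Finset.sum_sub_distrib, ← Finset.mul_sum, Finset.sum_const,
      Finset.card_univ, Fintype.card_fin, nsmul_eq_mul]
  unfold Qstat
  simp only [Fin.sum_univ_castSucc, Fin.snoc_castSucc, Fin.snoc_last]
  push_cast
  rw [expand, expand]
  field_simp
  ring

/-- Kolmogorov consistency of the Gaussian closed-form intensities:
`∫_{-∞}^∞ λ_{n+1,p}(y₁,…,yₙ,x) dx = λ_{n,p}(y)`. -/
theorem gauss_intensity_consistent (n : ℕ) (hn : 2 ≤ n) (p : ℝ)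
    (hp : 2 < (n : ℝ) + p) (y : Fin n → ℝ) (hQ : 0 < Qstat n y) :
    ∫⁻ x : ℝ, ENNReal.ofReal (lamClosed (n + 1) p (Fin.snoc y x)) =
      ENNReal.ofReal (lamClosed n p y) := by
  have hn0 : (0:ℝ) < n := by positivity
  have hn0' : 0 < n := by omega
  set s : ℝ := ((n : ℝ) + p - 1) / 2 with hs_def
  have hs : 1/2 < s := by rw [hs_def]; linarith
  set c : ℝ := (n : ℝ) / ((n : ℝ) + 1) with hc_def
  have hc : 0 < c := by positivity
  set m : ℝ := (∑ j, y j) / n with hm_def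
  set K : ℝ := Real.Gamma s * (2:ℝ) ^ ((p - 3)/2) * π ^ (-(n:ℝ)/2) *
    ((n:ℝ) + 1) ^ (-(1:ℝ)/2) with hK_def
  have hK : 0 ≤ K := by
    have := Real.Gamma_pos_of_pos (show 0 < s by linarith)
    positivity
  have point : ∀ x : ℝ, lamClosed (n + 1) p (Fin.snoc y x) =
      K * ((Qstat n y + c * (x - m) ^ 2) ^ (-s)) := by
    intro x
    have hpos : 0 < Qstat n y + c * (x - m) ^ 2 := by positivity
    unfold lamClosed
    rw [Qstat_snoc n hn0' y x]
    push_cast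
    rw [show ((n:ℝ) + 1 + p - 2) / 2 = s by rw [hs_def]; ring,
      show (-((n:ℝ) + 1 - 1) / 2) = (-(n:ℝ)/2) by ring]
    rw [div_eq_mul_inv, ← Real.rpow_neg hpos.le]
  simp_rw [point]
  simp_rw [ENNReal.ofReal_mul hK]
  rw [lintegral_const_mul' _ _ ENNReal.ofReal_ne_top]
  have trans : (∫⁻ x : ℝ, ENNReal.ofReal ((Qstat n y + c * (x - m) ^ 2) ^ (-s))) =
      ∫⁻ x : ℝ, ENNReal.ofReal ((Qstat n y + c * x ^ 2) ^ (-s)) := by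
    have := lintegral_add_right_eq_self (μ := volume)
      (f := fun x : ℝ => ENNReal.ofReal ((Qstat n y + c * x ^ 2) ^ (-s))) (-m)
    simp only [← sub_eq_add_neg] at this
    exact this
  rw [trans, aux_key hQ hc hs, ← ENNReal.ofReal_mul hK]
  congr 1
  -- Now the purely real constant identity
  have hG : (0:ℝ) < Real.Gamma s := Real.Gamma_pos_of_pos (by linarith)
  have hπ : (0:ℝ) < π := Real.pi_pos
  rw [hK_def]
  unfold lamClosed
  rw [show ((n:ℝ) + p - 2) / 2 = s - 1/2 by rw [hs_def]; ring]
  have e0 : Real.sqrt (π / c) = π ^ ((1:ℝ)/2) * ((n:ℝ)+1) ^ ((1:ℝ)/2) * (n:ℝ) ^ (-(1:ℝ)/2) := by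
    rw [hc_def, show π / ((n:ℝ) / ((n:ℝ)+1)) = (π * ((n:ℝ)+1)) * (n:ℝ)⁻¹ by
      field_simp]
    rw [Real.sqrt_mul (by positivity), Real.sqrt_mul hπ.le, Real.sqrt_inv,
      Real.sqrt_eq_rpow, Real.sqrt_eq_rpow, Real.sqrt_eq_rpow,
      ← Real.rpow_neg hn0.le]
    ring_nf
  rw [e0]
  have e1 : π ^ (-(n:ℝ)/2) * π ^ ((1:ℝ)/2) = π ^ ((1 - (n:ℝ))/2) := by
    rw [← Real.rpow_add hπ]; ring_nf
  have e2 : ((n:ℝ)+1) ^ (-(1:ℝ)/2) * ((n:ℝ)+1) ^ ((1:ℝ)/2) = 1 := by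
    rw [← Real.rpow_add (by positivity)]; norm_num
  have e3 : ((1:ℝ)/Qstat n y) ^ (s - 1/2) = (Qstat n y ^ (s - 1/2))⁻¹ := by
    rw [one_div, Real.inv_rpow hQ.le]
  rw [e3]
  have hF : Qstat n y ^ (s - 1/2) ≠ 0 := (Real.rpow_pos_of_pos hQ _).ne'
  field_simp
  have e1' : π ^ (-((n:ℝ)/2)) * π ^ ((1:ℝ)/2) = π ^ (-(((n:ℝ)-1)/2)) := by
    rw [← Real.rpow_add hπ]; ring_nf
  have e2' : ((n:ℝ)+1) ^ (-((1:ℝ)/2)) * ((n:ℝ)+1) ^ ((1:ℝ)/2) = 1 := by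
    rw [← Real.rpow_add (by positivity)]; norm_num
  linear_combination (π ^ (-((n:ℝ)/2)) * π ^ ((1:ℝ)/2) * Real.Gamma ((2*s-1)/2)) * e2' +
    Real.Gamma ((2*s-1)/2) * e1'
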